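/- For all non-negative integers m and n, the Bernoulli number B_{m+n} satisfies B_{m+n} = \sum_{k=0}^{n} \sum_{l=0}^{m} (-1)^{k+l} * k! * l! * S(n,k) * S(m,l) / ((k+l+1) * C(k+l, l)), where C(k+l, l) denotes the binomial coefficient. -/

import Mathlib

open Finset

/-- The Stirling numbers of the second kind `S(n,k)`, the number of ways of
partitioning a set of `n` elements into `k` nonempty sets. -/
def stirling2 : ℕ → ℕ → ℕ
  | 0, 0 => 1
  | 0, _ + 1 => 0
  | _ + 1, 0 => 0
  | n + 1, k + 1 => (k + 1) * stirling2 n (k + 1) + stirling2 n k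

lemma st_zero (n : ℕ) : ∀ k, n < k → stirling2 n k = 0 := by
  induction n with
  | zero => intro k hk; match k, hk with
    | k + 1, _ => rfl
  | succ n ih =>
    intro k hk
    match k, hk with
    | k + 1, hk =>
      show (k + 1) * stirling2 n (k + 1) + stirling2 n k = 0
      rw [ih (k+1) (by omega), ih k (by omega)]; ring

lemma choose_expand (n : ℕ) (f : ℕ → ℕ) : ∑ i ∈ range (n + 2), (n+1).choose i * f i
    = ∑ i ∈ range (n + 1), n.choose i * f i + ∑ i ∈ range (n + 1), n.choose i * f (i + 1) := by
  rw [Finset.sum_range_succ' (fun i => (n+1).choose i * f i) (n+1)]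
  have h0 : ∀ i, (n+1).choose (i+1) * f (i+1) = n.choose (i+1) * f (i+1) + n.choose i * f (i+1) := by
    intro i; rw [Nat.choose_succ_succ]; ring
  rw [Finset.sum_congr rfl (fun i _ => h0 i), Finset.sum_add_distrib]
  have h1 : ∑ i ∈ range (n + 1), n.choose (i+1) * f (i+1) + (n+1).choose 0 * f 0
      = ∑ i ∈ range (n + 1), n.choose i * f i := by
    have h2 := Finset.sum_range_succ' (fun i => n.choose i * f i) (n+1)
    have h3 := Finset.sum_range_succ (fun i => n.choose i * f i) (n+1)
    rw [Nat.choose_succ_self, zero_mul, add_zero] at h3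
    rw [Nat.choose_zero_right, one_mul]
    rw [← h3, h2]
    simp
  omega

lemma st_binom (n : ℕ) : ∀ k, ∑ i ∈ range (n + 1), n.choose i * stirling2 i k
    = stirling2 (n + 1) (k + 1) := by
  induction n with
  | zero =>
    intro k
    have : stirling2 1 (k+1) = (k+1) * stirling2 0 (k+1) + stirling2 0 k := rfl
    rw [this, st_zero 0 (k+1) (by omega)]
    simp
  | succ n ih =>
    intro k
    rw [choose_expand n (fun i => stirling2 i k)]
    match k with
    | 0 =>
      have h2 : ∑ i ∈ range (n + 1), n.choose i * stirling2 (i + 1) 0 = 0 := by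
        apply Finset.sum_eq_zero; intro i _; show n.choose i * 0 = 0; ring
      rw [h2, ih 0, add_zero]
      show stirling2 (n+1) 1 = 1 * stirling2 (n+1) 1 + stirling2 (n+1) 0
      show stirling2 (n+1) 1 = 1 * stirling2 (n+1) 1 + 0
      ring
    | k + 1 =>
      have h2 : ∀ i, n.choose i * stirling2 (i + 1) (k + 1)
          = (k+1) * (n.choose i * stirling2 i (k+1)) + n.choose i * stirling2 i k := by
        intro i; show n.choose i * ((k+1) * stirling2 i (k+1) + stirling2 i k) = _; ring
      rw [Finset.sum_congr rfl (fun i _ => h2 i), Finset.sum_add_distrib, ← Finset.mul_sum,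
        ih (k+1), ih k]
      show _ = (k+2) * stirling2 (n+1) (k+2) + stirling2 (n+1) (k+1)
      ring

lemma st_rec (n k : ℕ) : stirling2 (n+1) (k+1) = (k + 1) * stirling2 n (k + 1) + stirling2 n k := rfl
lemma st00 : stirling2 0 0 = 1 := rfl
lemma stS0 (n : ℕ) : stirling2 (n+1) 0 = 0 := rfl

noncomputable def cc (n k : ℕ) : ℚ := (-1)^k * k.factorial * stirling2 n k

noncomputable def bb (n : ℕ) : ℚ := ∑ k ∈ range (n+1), cc n k / (k+1)

lemma cc_zero (n k : ℕ) (h : n < k) : cc n k = 0 := by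
  simp [cc, st_zero n k h]

lemma telescope (n : ℕ) :
    ∑ k ∈ range (n + 1), (-1:ℚ)^k * k.factorial * stirling2 (n+1) (k+1) = stirling2 n 0 := by
  have h : ∀ k, (-1:ℚ)^k * k.factorial * stirling2 (n+1) (k+1) = cc n k - cc n (k+1) := by
    intro k
    rw [st_rec]
    simp only [cc, pow_succ, Nat.factorial_succ]
    push_cast
    ring
  rw [Finset.sum_congr rfl (fun k _ => h k), Finset.sum_range_sub' (fun k => cc n k) (n+1),
    cc_zero n (n+1) (by omega), sub_zero]
  simp [cc]

lemma bb_rec (n : ℕ) : ∑ i ∈ range n, (n.choose i : ℚ) * bb i = if n = 1 then 1 else 0 := by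
  match n with
  | 0 => simp
  | m + 1 =>
    have hfull : ∑ i ∈ range (m+2), ((m+1).choose i : ℚ) * bb i
        = ∑ k ∈ range (m+2), ((-1:ℚ)^k * k.factorial * stirling2 (m+2) (k+1)) / (k+1) := by
      have h1 : ∀ i ∈ range (m+2), ((m+1).choose i : ℚ) * bb i
          = ∑ k ∈ range (m+2), ((m+1).choose i : ℚ) * (cc i k / (k+1)) := by
        intro i hi
        rw [bb, Finset.mul_sum]
        apply Finset.sum_subset
        · intro x hx; simp only [mem_range] at *; omega
        · intro x _ hx
          simp only [mem_range] at hx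
          rw [cc_zero i x (by simp only [mem_range] at hi; omega)]
          simp
      rw [Finset.sum_congr rfl h1, Finset.sum_comm]
      apply Finset.sum_congr rfl
      intro k _
      have h2 : ∀ i, ((m+1).choose i : ℚ) * (cc i k / (k+1))
          = ((m+1).choose i * stirling2 i k : ℕ) * ((-1:ℚ)^k * k.factorial / (k+1)) := by
        intro i; simp only [cc]; push_cast; ring
      rw [Finset.sum_congr rfl (fun i _ => h2 i), ← Finset.sum_mul, ← Nat.cast_sum,
        st_binom (m+1) k]
      ring
    have hsplit := Finset.sum_range_succ (fun i => ((m+1).choose i : ℚ) * bb i) (m+1)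
    have hlast : ((m+1).choose (m+1) : ℚ) * bb (m+1) = bb (m+1) := by simp
    have hrhs : ∑ k ∈ range (m+2), ((-1:ℚ)^k * k.factorial * stirling2 (m+2) (k+1)) / (k+1)
        = (stirling2 m 0 : ℚ) + bb (m+1) := by
      have h3 : ∀ k, ((-1:ℚ)^k * k.factorial * stirling2 (m+2) (k+1)) / (k+1)
          = (-1:ℚ)^k * k.factorial * stirling2 (m+1) (k+1) + cc (m+1) k / (k+1) := by
        intro k
        rw [st_rec (m+1) k]
        have hk : ((k:ℚ)+1) ≠ 0 := by positivity
        simp only [cc]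
        push_cast
        field_simp
      rw [Finset.sum_congr rfl (fun k _ => h3 k), Finset.sum_add_distrib]
      rw [show (∑ k ∈ range (m+2), (-1:ℚ)^k * k.factorial * stirling2 (m+1) (k+1))
          = ∑ k ∈ range (m+1), (-1:ℚ)^k * k.factorial * stirling2 (m+1) (k+1) + 
            (-1:ℚ)^(m+1) * (m+1).factorial * stirling2 (m+1) (m+2) from
        Finset.sum_range_succ _ (m+1)]
      rw [st_zero (m+1) (m+2) (by omega), telescope m, bb]
      push_cast
      ring
    have : ∑ i ∈ range (m+1), ((m+1).choose i : ℚ) * bb i = (stirling2 m 0 : ℚ) := by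
      have := hfull
      rw [hsplit] at this
      rw [hrhs] at this
      rw [hlast] at this
      linarith
    rw [this]
    match m with
    | 0 => rw [st00]; simp
    | m + 1 => rw [stS0]; simp

lemma bb_eq_bernoulli (n : ℕ) : bb n = bernoulli n := by
  induction n using Nat.strong_induction_on with
  | _ n ih =>
    have h1 := bb_rec (n+1)
    have h2 := sum_bernoulli (n+1)
    rw [Finset.sum_range_succ] at h1 h2
    have h3 : ∑ i ∈ range n, ((n+1).choose i : ℚ) * bb i
        = ∑ i ∈ range n, ((n+1).choose i : ℚ) * bernoulli i := by
      apply Finset.sum_congr rfl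
      intro i hi
      rw [ih i (by simp only [mem_range] at hi; omega)]
    rw [h3] at h1
    have h4 : ((n+1).choose n : ℚ) ≠ 0 := by
      rw [Nat.choose_succ_self_right]; positivity
    have h5 : ((n+1).choose n : ℚ) * bb n = ((n+1).choose n : ℚ) * bernoulli n := by
      linarith
    exact mul_left_cancel₀ h4 h5

noncomputable def bet (k l : ℕ) : ℚ := (k.factorial * l.factorial) / (k+l+1).factorial

lemma bet_symm (k l : ℕ) : bet k l = bet l k := by
  unfold bet
  rw [show l + k + 1 = k + l + 1 from by omega]
  ring

lemma bet_rel (k l : ℕ) : k * bet k l - (k+1) * bet (k+1) l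
    = l * bet k l - (l+1) * bet k (l+1) := by
  unfold bet
  rw [show k + 1 + l + 1 = (k+l+1) + 1 from by omega,
      show k + (l+1) + 1 = (k+l+1) + 1 from by omega]
  simp only [Nat.factorial_succ]
  have h1 : ((k+l+1).factorial : ℚ) ≠ 0 := by positivity
  have h2 : ((k+l+1 : ℕ) : ℚ) + 1 ≠ 0 := by positivity
  field_simp
  push_cast
  ring

lemma cc_S0 (n : ℕ) : cc (n+1) 0 = 0 := by simp [cc, stS0]

lemma cc_rec (n k : ℕ) : cc (n+1) (k+1) = (k+1) * (cc n (k+1) - cc n k) := by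
  unfold cc
  rw [st_rec]
  simp only [pow_succ, Nat.factorial_succ]
  push_cast
  ring

lemma step (n N : ℕ) (hN : n < N) (B : ℕ → ℚ) :
    ∑ k ∈ range (N+1), cc (n+1) k * B k
    = ∑ k ∈ range (N+1), cc n k * ((k : ℚ) * B k - ((k:ℚ)+1) * B (k+1)) := by
  rw [Finset.sum_range_succ' (fun k => cc (n+1) k * B k) N, cc_S0, zero_mul, add_zero]
  have h1 : ∀ j, cc (n+1) (j+1) * B (j+1)
      = ((j:ℚ)+1) * cc n (j+1) * B (j+1) - ((j:ℚ)+1) * cc n j * B (j+1) := by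
    intro j; rw [cc_rec]; ring
  rw [Finset.sum_congr rfl (fun j _ => h1 j), Finset.sum_sub_distrib]
  have h2 : ∑ j ∈ range N, ((j:ℚ)+1) * cc n (j+1) * B (j+1)
      = ∑ k ∈ range (N+1), (k : ℚ) * cc n k * B k := by
    rw [Finset.sum_range_succ' (fun k => (k : ℚ) * cc n k * B k) N]
    push_cast
    ring
  have h3 : ∑ j ∈ range N, ((j:ℚ)+1) * cc n j * B (j+1)
      = ∑ k ∈ range (N+1), ((k:ℚ)+1) * cc n k * B (k+1) := by
    rw [Finset.sum_range_succ, cc_zero n N hN]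
    ring
  rw [h2, h3, ← Finset.sum_sub_distrib]
  apply Finset.sum_congr rfl
  intro k _
  ring

noncomputable def II (n m N : ℕ) : ℚ :=
  ∑ k ∈ range N, ∑ l ∈ range N, cc n k * cc m l * bet k l

lemma II_eq (n m N : ℕ) (hn : n < N) (hm : m < N) :
    II n m N = ∑ k ∈ range (n+1), ∑ l ∈ range (m+1), cc n k * cc m l * bet k l := by
  unfold II
  have h1 : ∀ k, ∑ l ∈ range N, cc n k * cc m l * bet k l
      = ∑ l ∈ range (m+1), cc n k * cc m l * bet k l := by
    intro k
    symm
    apply Finset.sum_subset (Finset.range_subset_range.mpr (by omega))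
    intro x _ hx
    simp only [mem_range] at hx
    rw [cc_zero m x (by omega)]
    ring
  rw [Finset.sum_congr rfl (fun k _ => h1 k)]
  symm
  apply Finset.sum_subset (Finset.range_subset_range.mpr (by omega))
  intro x _ hx
  simp only [mem_range] at hx
  rw [Finset.sum_eq_zero]
  intro l _
  rw [cc_zero n x (by omega)]
  ring

lemma II_shift (n m N : ℕ) (hn : n < N) (hm : m < N) :
    II (n+1) m (N+1) = II n (m+1) (N+1) := by
  unfold II
  rw [Finset.sum_comm]
  have lhs : ∀ l, ∑ k ∈ range (N+1), cc (n+1) k * cc m l * bet k l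
      = ∑ k ∈ range (N+1), cc n k * cc m l * ((l:ℚ) * bet k l - ((l:ℚ)+1) * bet k (l+1)) := by
    intro l
    have h := step n N hn (fun k => cc m l * bet k l)
    calc ∑ k ∈ range (N+1), cc (n+1) k * cc m l * bet k l
        = ∑ k ∈ range (N+1), cc (n+1) k * (cc m l * bet k l) := by
          apply Finset.sum_congr rfl; intro k _; ring
      _ = ∑ k ∈ range (N+1), cc n k * ((k:ℚ) * (cc m l * bet k l)
            - ((k:ℚ)+1) * (cc m l * bet (k+1) l)) := h
      _ = ∑ k ∈ range (N+1), cc n k * cc m l * ((l:ℚ) * bet k l - ((l:ℚ)+1) * bet k (l+1)) := by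
          apply Finset.sum_congr rfl; intro k _
          have := bet_rel k l
          calc cc n k * ((k:ℚ) * (cc m l * bet k l) - ((k:ℚ)+1) * (cc m l * bet (k+1) l))
              = cc n k * cc m l * ((k:ℚ) * bet k l - ((k:ℚ)+1) * bet (k+1) l) := by ring
            _ = _ := by rw [this]
  rw [Finset.sum_congr rfl (fun l _ => lhs l)]
  rw [Finset.sum_comm]
  apply Finset.sum_congr rfl
  intro k _
  have h := step m N hm (fun l => cc n k * bet k l)
  calc ∑ l ∈ range (N+1), cc n k * cc m l * ((l:ℚ) * bet k l - ((l:ℚ)+1) * bet k (l+1))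
      = ∑ l ∈ range (N+1), cc m l * ((l:ℚ) * (cc n k * bet k l)
          - ((l:ℚ)+1) * (cc n k * bet k (l+1))) := by
        apply Finset.sum_congr rfl; intro l _; ring
    _ = ∑ l ∈ range (N+1), cc (m+1) l * (cc n k * bet k l) := h.symm
    _ = ∑ l ∈ range (N+1), cc n k * cc (m+1) l * bet k l := by
        apply Finset.sum_congr rfl; intro l _; ring

lemma II_bern : ∀ n m : ℕ, II n m (n+m+3) = bernoulli (n+m) := by
  intro n
  induction n with
  | zero =>
    intro m
    rw [show (0:ℕ)+m = m from Nat.zero_add m]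
    rw [II_eq _ _ _ (by omega) (by omega)]
    rw [show (0:ℕ)+1 = 1 from rfl, Finset.sum_range_one]
    rw [← bb_eq_bernoulli, bb]
    apply Finset.sum_congr rfl
    intro l _
    have h0 : cc 0 0 = 1 := by simp [cc, st00]
    rw [h0, one_mul]
    unfold bet
    rw [show 0 + l + 1 = l + 1 from by omega, Nat.factorial_succ]
    have h1 : ((l.factorial : ℚ)) ≠ 0 := by positivity
    have h2 : ((l:ℚ)+1) ≠ 0 := by positivity
    field_simp
    push_cast
    ring
  | succ n ih =>
    intro m
    have e1 : II (n+1) m (n+1+m+3) = II (n+1) m (n+m+3) := by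
      rw [II_eq _ _ _ (by omega) (by omega), II_eq _ _ _ (by omega) (by omega)]
    have e2 : II (n+1) m (n+m+3) = II n (m+1) (n+m+3) :=
      II_shift n m (n+m+2) (by omega) (by omega)
    have e3 : II n (m+1) (n+m+3) = II n (m+1) (n+(m+1)+3) := by
      rw [II_eq _ _ _ (by omega) (by omega), II_eq _ _ _ (by omega) (by omega)]
    rw [e1, e2, e3, ih (m+1)]
    congr 1
    omega
theorem bernoulli_add_eq_double_sum (m n : ℕ) :
    bernoulli (m + n) =
      ∑ k ∈ Finset.range (n + 1), ∑ l ∈ Finset.range (m + 1),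
        (-1 : ℚ) ^ (k + l) * (Nat.factorial k) * (Nat.factorial l) *
          (stirling2 n k) * (stirling2 m l) /
            ((k + l + 1) * ((k + l).choose l)) := by
  have h := II_bern n m
  rw [show n + m = m + n from by omega] at h
  rw [← h, II_eq _ _ _ (by omega) (by omega)]
  apply Finset.sum_congr rfl; intro k _
  apply Finset.sum_congr rfl; intro l _
  have hcNat : (k+l).choose l * l.factorial * k.factorial = (k+l).factorial := by
    have h1 := Nat.choose_mul_factorial_mul_factorial (Nat.le_add_left l k)
    rwa [Nat.add_sub_cancel] at h1
  have hD : (((k:ℚ)+l+1) * ((k+l).choose l)) ≠ 0 := by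
    have : (0:ℚ) < (k+l).choose l := by
      have := Nat.choose_pos (Nat.le_add_left l k)
      positivity
    positivity
  have h2 : bet k l = 1 / (((k:ℚ)+l+1) * ((k+l).choose l)) := by
    unfold bet
    rw [div_eq_div_iff (by positivity) hD, Nat.factorial_succ]
    push_cast [← hcNat]
    ring
  rw [h2, pow_add]
  unfold cc
  ring
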